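/- Let α ∈ (0,1), ξ > 0 and ε1, δ1, q1 > 0 satisfy ε1 · max(1, ξ/(1+αξ)) ≤ δ1 + q1. Suppose x1, y1 : [0,∞) → ℝ are such that x1(t) ≥ 0 and y1(t) > 0 for all t ≥ 0, y1 is differentiable, and y1'(t) = (ε1 (x1(t)+ξ)/(1+x1(t)+αξ) − δ1 − q1) · y1(t) for all t ≥ 0. Then y1 is nonincreasing on [0,∞); in particular y1(t) ≤ y1(0) for all t ≥ 0, so the predator population in the AF patch remains bounded for all time (Theorem 2.1, blow-up prevention by drift). -/

import Mathlib

/-- Theorem 2.1 (blow-up prevention by drift): if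
`ε1 · max(1, ξ/(1+αξ)) ≤ δ1 + q1`, then any positive solution `y1` of
`y1' = (ε1 (x1+ξ)/(1+x1+αξ) − δ1 − q1) y1` with `x1 ≥ 0` is nonincreasing
on `[0,∞)`; in particular `y1 t ≤ y1 0` for all `t ≥ 0`. -/
theorem drift_prevents_predator_blowup
    (α ξ ε1 δ1 q1 : ℝ)
    (hα : 0 < α ∧ α < 1) (hξ : 0 < ξ)
    (hε1 : 0 < ε1) (hδ1 : 0 < δ1) (hq1 : 0 < q1)
    (hdamp : ε1 * max 1 (ξ / (1 + α * ξ)) ≤ δ1 + q1)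
    (x1 y1 : ℝ → ℝ)
    (hx1 : ∀ t : ℝ, 0 ≤ t → 0 ≤ x1 t)
    (hy1pos : ∀ t : ℝ, 0 ≤ t → 0 < y1 t)
    (hy1diff : Differentiable ℝ y1)
    (hode : ∀ t : ℝ, 0 ≤ t →
      deriv y1 t =
        (ε1 * (x1 t + ξ) / (1 + x1 t + α * ξ) - δ1 - q1) * y1 t) :
    AntitoneOn y1 (Set.Ici (0 : ℝ)) ∧ ∀ t : ℝ, 0 ≤ t → y1 t ≤ y1 0 := by
  have hαξ : 0 < 1 + α * ξ := by nlinarith [hα.1, hξ]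
  set M : ℝ := max 1 (ξ / (1 + α * ξ)) with hM
  have hM1 : (1 : ℝ) ≤ M := le_max_left _ _
  have hMξ : ξ ≤ M * (1 + α * ξ) := by
    have := le_max_right 1 (ξ / (1 + α * ξ))
    calc ξ = ξ / (1 + α * ξ) * (1 + α * ξ) := by rw [div_mul_cancel₀ ξ hαξ.ne']
    _ ≤ M * (1 + α * ξ) := by
        exact mul_le_mul_of_nonneg_right this (le_of_lt hαξ)
  have hderiv : ∀ t : ℝ, 0 ≤ t → deriv y1 t ≤ 0 := by
    intro t ht
    rw [hode t ht]
    have hx := hx1 t ht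
    have hden : 0 < 1 + x1 t + α * ξ := by linarith
    have hfrac : ε1 * (x1 t + ξ) / (1 + x1 t + α * ξ) ≤ ε1 * M := by
      rw [div_le_iff₀ hden]
      have : x1 t + ξ ≤ M * (1 + x1 t + α * ξ) := by nlinarith
      nlinarith
    have : ε1 * (x1 t + ξ) / (1 + x1 t + α * ξ) - δ1 - q1 ≤ 0 := by
      have := hfrac.trans hdamp; linarith
    exact mul_nonpos_of_nonpos_of_nonneg this (hy1pos t ht).le
  have hanti : AntitoneOn y1 (Set.Ici (0 : ℝ)) := by
    apply antitoneOn_of_deriv_nonpos (convex_Ici 0)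
      hy1diff.continuous.continuousOn
      (hy1diff.differentiableOn.mono interior_subset)
    intro t ht
    rw [interior_Ici] at ht
    exact hderiv t (le_of_lt ht)
  exact ⟨hanti, fun t ht => hanti Set.self_mem_Ici ht ht⟩
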